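/- Let w be a weight sequence, H a separable complex Hilbert space, ε > 0, and A ∈ E_w(H) a non-normal operator with a Schur decomposition A = D + N whose quasi-nilpotent part N satisfies |N|_{ẇ̄} > 0. Let C > 0 be a constant such that ‖Q^{2k}‖ ≤ C^{2k}·(s_1(Q)⋯s_k(Q))² for every k ≥ 1 and every quasi-nilpotent compact operator Q on H. Then the ε-pseudospectrum of A satisfies σ_ε(A) ⊆ { z ∈ ℂ : d(z,σ(A)) < |N|_{ẇ̄} · H_w( ε / |N|_{ẇ̄} ) }. -/

import Mathlib

open Filter Topology

noncomputable section

def IsWeight (w : ℕ → ℝ) : Prop :=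
  (∀ k, 1 ≤ k → w (k + 1) ≤ w k) ∧ (∀ k, 1 ≤ k → 0 ≤ w k) ∧
    Filter.Tendsto w Filter.atTop (nhds 0)

def sNum {H₁ H₂ : Type*} [NormedAddCommGroup H₁] [NormedSpace ℂ H₁]
    [NormedAddCommGroup H₂] [NormedSpace ℂ H₂] (k : ℕ) (A : H₁ →L[ℂ] H₂) : ℝ :=
  sInf {c : ℝ | ∃ F : H₁ →L[ℂ] H₂,
    Module.rank ℂ (LinearMap.range (F : H₁ →ₗ[ℂ] H₂)) < (k : Cardinal) ∧ c = ‖A - F‖}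

def MemE {H₁ H₂ : Type*} [NormedAddCommGroup H₁] [NormedSpace ℂ H₁]
    [NormedAddCommGroup H₂] [NormedSpace ℂ H₂] (w : ℕ → ℝ) (A : H₁ →L[ℂ] H₂) : Prop :=
  IsCompactOperator A ∧ ∃ M : ℝ, 0 ≤ M ∧ ∀ k, 1 ≤ k → sNum k A ≤ M * w k

def gaugeE {H₁ H₂ : Type*} [NormedAddCommGroup H₁] [NormedSpace ℂ H₁]
    [NormedAddCommGroup H₂] [NormedSpace ℂ H₂] (w : ℕ → ℝ) (A : H₁ →L[ℂ] H₂) : ℝ :=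
  sInf {M : ℝ | 0 ≤ M ∧ ∀ k, 1 ≤ k → sNum k A ≤ M * w k}

def dbl (w : ℕ → ℝ) (k : ℕ) : ℝ := w ((k + 1) / 2)

def gmean (w : ℕ → ℝ) (k : ℕ) : ℝ := (∏ n ∈ Finset.Icc 1 k, w n) ^ ((1 : ℝ) / (k : ℝ))

def algMult {H : Type*} [NormedAddCommGroup H] [NormedSpace ℂ H] (A : H →L[ℂ] H) (z : ℂ) : ℕ :=
  Module.finrank ℂ (Module.End.maxGenEigenspace (A : H →ₗ[ℂ] H) z)

def IsEigSeq {H : Type*} [NormedAddCommGroup H] [NormedSpace ℂ H]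
    (A : H →L[ℂ] H) (lam : ℕ → ℂ) : Prop :=
  (∀ k, 1 ≤ k → ‖lam (k + 1)‖ ≤ ‖lam k‖) ∧
  ∀ z : ℂ, z ≠ 0 →
    {k : ℕ | 1 ≤ k ∧ lam k = z}.Finite ∧ {k : ℕ | 1 ≤ k ∧ lam k = z}.ncard = algMult A z

def IsSchurDecomp {H : Type*} [NormedAddCommGroup H] [InnerProductSpace ℂ H] [CompleteSpace H]
    (A D N : H →L[ℂ] H) : Prop :=
  A = D + N ∧ IsCompactOperator D ∧ IsCompactOperator N ∧ IsStarNormal D ∧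
  (∀ z : ℂ, z ≠ 0 → algMult D z = algMult A z) ∧
  spectrum ℂ D = spectrum ℂ A ∧
  spectrum ℂ N = {0} ∧
  ∀ z : ℂ, z ∉ spectrum ℂ A →
    spectrum ℂ (Ring.inverse (algebraMap ℂ (H →L[ℂ] H) z - D) * N) = {0}

def Fw (C : ℝ) (w : ℕ → ℝ) (r : ℝ) : ℝ :=
  (1 + r * w 1) *
    (1 + ∑' k : ℕ, (∏ n ∈ Finset.Icc 1 (k + 1), w n) ^ 2 * (C * r) ^ (2 * (k + 1)))

def Ftilde (C : ℝ) (w : ℕ → ℝ) (r : ℝ) : ℝ := r * Fw C w r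

def specVar (s t : Set ℂ) : ℝ := ⨆ z : s, Metric.infDist (z : ℂ) t

def hausD (s t : Set ℂ) : ℝ := max (specVar s t) (specVar t s)

def pseudoSpec {H : Type*} [NormedAddCommGroup H] [NormedSpace ℂ H] [CompleteSpace H]
    (ε : ℝ) (A : H →L[ℂ] H) : Set ℂ :=
  spectrum ℂ A ∪ {z : ℂ | z ∉ spectrum ℂ A ∧ 1 / ε < ‖resolvent A z‖}

variable {H : Type*} [NormedAddCommGroup H] [InnerProductSpace ℂ H] [CompleteSpace H]
  [TopologicalSpace.SeparableSpace H]


section AuxLemmas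

open scoped ENNReal NNReal

variable {H' : Type*} [NormedAddCommGroup H'] [InnerProductSpace ℂ H'] [CompleteSpace H']

lemma sNum_nonneg (k : ℕ) (A : H' →L[ℂ] H') : 0 ≤ sNum k A :=
  Real.sInf_nonneg fun c hc => by obtain ⟨F, _, rfl⟩ := hc; exact norm_nonneg _

omit [CompleteSpace H'] in
lemma eq_zero_of_rank_lt_one {F : H' →L[ℂ] H'}
    (h : Module.rank ℂ (LinearMap.range (F : H' →ₗ[ℂ] H')) < (1 : Cardinal)) : F = 0 := by
  rw [Cardinal.lt_one_iff_zero, rank_zero_iff] at h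
  ext x
  have hx : (⟨F x, LinearMap.mem_range_self _ x⟩ : LinearMap.range (F : H' →ₗ[ℂ] H'))
      = ⟨0, Submodule.zero_mem _⟩ := Subsingleton.elim _ _
  simpa using congrArg Subtype.val hx

omit [CompleteSpace H'] in
lemma sNum_one (A : H' →L[ℂ] H') : sNum 1 A = ‖A‖ := by
  have : {c : ℝ | ∃ F : H' →L[ℂ] H',
      Module.rank ℂ (LinearMap.range (F : H' →ₗ[ℂ] H')) < ((1:ℕ) : Cardinal) ∧ c = ‖A - F‖} = {‖A‖} := by
    ext c
    constructor
    · rintro ⟨F, hF, rfl⟩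
      rw [Nat.cast_one] at hF
      rw [eq_zero_of_rank_lt_one hF, sub_zero]
      rfl
    · rintro rfl
      refine ⟨0, ?_, by rw [sub_zero]⟩
      simp only [Nat.cast_one]
      rw [Cardinal.lt_one_iff_zero, rank_zero_iff]
      constructor
      rintro ⟨x, hx⟩ ⟨y, hy⟩
      obtain ⟨x', rfl⟩ := hx
      obtain ⟨y', rfl⟩ := hy
      exact Subtype.ext (by simp)
  rw [sNum, this, csInf_singleton]

omit [CompleteSpace H'] in
lemma sNum_mem_nonempty {n : ℕ} (hn : 1 ≤ n) (A : H' →L[ℂ] H') :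
    Set.Nonempty {c : ℝ | ∃ F : H' →L[ℂ] H',
      Module.rank ℂ (LinearMap.range (F : H' →ₗ[ℂ] H')) < (n : Cardinal) ∧ c = ‖A - F‖} := by
  refine ⟨‖A‖, 0, ?_, by rw [sub_zero]⟩
  have h0 : Module.rank ℂ (LinearMap.range ((0 : H' →L[ℂ] H') : H' →ₗ[ℂ] H')) = 0 := by
    rw [rank_zero_iff]
    constructor
    rintro ⟨x, hx⟩ ⟨y, hy⟩
    obtain ⟨x', rfl⟩ := hx
    obtain ⟨y', rfl⟩ := hy
    exact Subtype.ext (by simp)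
  rw [h0]
  exact_mod_cast Nat.pos_of_ne_zero (by omega)

omit [CompleteSpace H'] in
lemma sNum_mul_le {n : ℕ} (hn : 1 ≤ n) (R N : H' →L[ℂ] H') :
    sNum n (R * N) ≤ ‖R‖ * sNum n N := by
  set S := {c : ℝ | ∃ F : H' →L[ℂ] H',
      Module.rank ℂ (LinearMap.range (F : H' →ₗ[ℂ] H')) < (n : Cardinal) ∧ c = ‖N - F‖} with hS
  have hSne : S.Nonempty := sNum_mem_nonempty hn N
  have key : ∀ c ∈ S, sNum n (R * N) ≤ ‖R‖ * c := by
    rintro c ⟨F, hF, rfl⟩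
    have hrank : Module.rank ℂ (LinearMap.range ((R * F : H' →L[ℂ] H') : H' →ₗ[ℂ] H')) < (n : Cardinal) := by
      have h1 : LinearMap.range ((R * F : H' →L[ℂ] H') : H' →ₗ[ℂ] H') =
          Submodule.map (R : H' →ₗ[ℂ] H') (LinearMap.range (F : H' →ₗ[ℂ] H')) := by
        ext x
        simp only [LinearMap.mem_range, Submodule.mem_map, ContinuousLinearMap.mul_apply,
          ContinuousLinearMap.coe_coe]
        constructor
        · rintro ⟨y, rfl⟩; exact ⟨F y, ⟨y, rfl⟩, rfl⟩
        · rintro ⟨_, ⟨y, rfl⟩, rfl⟩; exact ⟨y, rfl⟩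
      rw [h1]
      exact lt_of_le_of_lt (rank_map_le _ _) hF
    have hmem : ‖R * N - R * F‖ ∈ {c : ℝ | ∃ F : H' →L[ℂ] H',
        Module.rank ℂ (LinearMap.range (F : H' →ₗ[ℂ] H')) < (n : Cardinal) ∧ c = ‖R * N - F‖} :=
      ⟨R * F, hrank, rfl⟩
    have h2 : sNum n (R * N) ≤ ‖R * N - R * F‖ :=
      csInf_le ⟨0, fun c hc => by obtain ⟨F', _, rfl⟩ := hc; exact norm_nonneg _⟩ hmem
    calc sNum n (R * N) ≤ ‖R * N - R * F‖ := h2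
      _ = ‖R * (N - F)‖ := by rw [mul_sub]
      _ ≤ ‖R‖ * ‖N - F‖ := norm_mul_le _ _
  rcases eq_or_lt_of_le (norm_nonneg R) with h0 | hpos
  · obtain ⟨c, hc⟩ := hSne
    calc sNum n (R * N) ≤ ‖R‖ * c := key c hc
      _ = 0 := by rw [← h0, zero_mul]
      _ ≤ ‖R‖ * sNum n N := by rw [← h0, zero_mul]
  · have h3 : sNum n (R * N) / ‖R‖ ≤ sInf S :=
      le_csInf hSne fun c hc => (div_le_iff₀ hpos).mpr ((key c hc).trans_eq (mul_comm _ _))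
    have : sNum n (R * N) ≤ sInf S * ‖R‖ := (div_le_iff₀ hpos).mp h3
    rw [mul_comm] at this
    exact this

lemma norm_ring_inverse_le (u : H' →L[ℂ] H') (hu : IsUnit u)
    (hcomm : star u * u = u * star u) {d : ℝ} (hd : 0 < d)
    (hspec : ∀ μ ∈ spectrum ℂ u, d ≤ ‖μ‖) : ‖Ring.inverse u‖ ≤ 1 / d := by
  obtain ⟨U, hU⟩ := hu
  have hRinv : Ring.inverse u = ((U⁻¹ : (H' →L[ℂ] H')ˣ) : H' →L[ℂ] H') := by
    rw [← hU, Ring.inverse_unit]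
  set a : H' →L[ℂ] H' := ((U⁻¹ : (H' →L[ℂ] H')ˣ) : H' →L[ℂ] H') with ha
  have hau : a * u = 1 := by rw [← hU]; exact U.inv_mul
  have hua : u * a = 1 := by rw [← hU]; exact U.mul_inv
  have h1 : star a * star u = 1 := by rw [← star_mul, hua, star_one]
  have h2 : star u * star a = 1 := by rw [← star_mul, hau, star_one]
  have hstar_a_u : u * star a = star a * u := by
    calc u * star a = 1 * (u * star a) := (one_mul _).symm
      _ = (star a * star u) * (u * star a) := by rw [h1]
      _ = star a * ((star u * u) * star a) := by simp only [mul_assoc]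
      _ = star a * ((u * star u) * star a) := by rw [hcomm]
      _ = (star a * u) * (star u * star a) := by simp only [mul_assoc]
      _ = (star a * u) * 1 := by rw [h2]
      _ = star a * u := mul_one _
  have hnormal : a * star a = star a * a := by
    calc a * star a = a * (star a * (u * a)) := by rw [hua, mul_one]
      _ = a * ((star a * u) * a) := by simp only [mul_assoc]
      _ = a * ((u * star a) * a) := by rw [hstar_a_u]
      _ = (a * u) * (star a * a) := by simp only [mul_assoc]
      _ = star a * a := by rw [hau, one_mul]
  haveI : IsStarNormal a := ⟨hnormal.symm⟩
  have hsr : spectralRadius ℂ a = (‖a‖₊ : ℝ≥0∞) := IsStarNormal.spectralRadius_eq_nnnorm a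
  have hbound : spectralRadius ℂ a ≤ ENNReal.ofReal (1 / d) := by
    refine iSup₂_le fun μ hμ => ?_
    have hμ0 : μ ≠ 0 := by
      intro h
      rw [h] at hμ
      exact spectrum.not_isUnit_of_zero_mem _ hμ (U⁻¹).isUnit
    have hinv : μ⁻¹ ∈ spectrum ℂ u := by
      have := spectrum.inv_mem_iff (r := Units.mk0 μ hμ0) (a := U⁻¹)
      have h3 : ((Units.mk0 μ hμ0 : ℂˣ) : ℂ)
          ∈ spectrum ℂ ((U⁻¹ : (H' →L[ℂ] H')ˣ) : H' →L[ℂ] H') := hμ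
      have h4 := this.mp h3
      rw [inv_inv] at h4
      simpa [hU] using h4
    have hdμ : d ≤ ‖μ⁻¹‖ := hspec _ hinv
    rw [norm_inv] at hdμ
    have hμpos : 0 < ‖μ‖ := norm_pos_iff.mpr hμ0
    have hle : ‖μ‖ ≤ 1 / d := by
      rw [le_div_iff₀ hd]
      calc ‖μ‖ * d ≤ ‖μ‖ * ‖μ‖⁻¹ := mul_le_mul_of_nonneg_left hdμ hμpos.le
        _ = 1 := mul_inv_cancel₀ hμpos.ne'
    rw [← enorm_eq_nnnorm, ← ofReal_norm]
    exact ENNReal.ofReal_le_ofReal hle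
  rw [hsr] at hbound
  rw [hRinv, ← enorm_eq_nnnorm, ← ofReal_norm] at *
  exact (ENNReal.ofReal_le_ofReal_iff (by positivity)).mp hbound

end AuxLemmas

section WeightLemmas

lemma weight_anti {w : ℕ → ℝ} (hw : IsWeight w) : ∀ a b, 1 ≤ a → a ≤ b → w b ≤ w a := by
  intro a b ha hab
  induction b, hab using Nat.le_induction with
  | base => exact le_rfl
  | succ b hab ih => exact le_trans (hw.1 b (le_trans ha hab)) ih

lemma gmean_nonneg {w : ℕ → ℝ} (hw : IsWeight w) (k : ℕ) : 0 ≤ gmean w k :=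
  Real.rpow_nonneg (Finset.prod_nonneg fun i hi => hw.2.1 i (Finset.mem_Icc.mp hi).1) _

lemma gmean_small {w : ℕ → ℝ} (hw : IsWeight w) {ε : ℝ} (hε : 0 < ε) :
    ∃ K, 1 ≤ K ∧ ∀ m, K ≤ m → gmean w m ≤ ε := by
  obtain ⟨j₀, hj₀⟩ := (Filter.eventually_atTop).mp
    (Filter.Tendsto.eventually_lt_const (by positivity : (0:ℝ) < ε/2) hw.2.2)
  set j := max j₀ 1 with hj
  have hj1 : 1 ≤ j := le_max_right _ _
  have hwj : w j ≤ ε / 2 := (hj₀ j (le_max_left _ _)).le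
  set w1 := w 1 with hw1
  have hw1n : 0 ≤ w1 := hw.2.1 1 le_rfl
  obtain ⟨n₀, hn₀⟩ := exists_pow_lt_of_lt_one
    (by positivity : (0:ℝ) < ε ^ j / (w1 ^ j + 1)) (by norm_num : (1:ℝ)/2 < 1)
  refine ⟨j + n₀ + 1, by omega, fun m hm => ?_⟩
  have hjm : j ≤ m := by omega
  have hm1 : 1 ≤ m := by omega
  have hsplit : (∏ n ∈ Finset.Icc 1 m, w n)
      = (∏ n ∈ Finset.Ioc 0 j, w n) * (∏ n ∈ Finset.Ioc j m, w n) := by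
    rw [← Finset.Icc_add_one_left_eq_Ioc]
    exact (Finset.prod_Ioc_consecutive w (Nat.zero_le j) hjm).symm
  have hb1 : (∏ n ∈ Finset.Ioc 0 j, w n) ≤ w1 ^ j := by
    calc (∏ n ∈ Finset.Ioc 0 j, w n) ≤ ∏ _n ∈ Finset.Ioc 0 j, w1 := by
          refine Finset.prod_le_prod (fun i hi => hw.2.1 i (Finset.mem_Ioc.mp hi).1)
            (fun i hi => weight_anti hw 1 i le_rfl (Finset.mem_Ioc.mp hi).1)
      _ = w1 ^ j := by rw [Finset.prod_const, Nat.card_Ioc, Nat.sub_zero]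
  have hb2 : (∏ n ∈ Finset.Ioc j m, w n) ≤ (ε/2) ^ (m - j) := by
    calc (∏ n ∈ Finset.Ioc j m, w n) ≤ ∏ _n ∈ Finset.Ioc j m, (ε/2) := by
          refine Finset.prod_le_prod
            (fun i hi => hw.2.1 i (le_trans hj1 (Finset.mem_Ioc.mp hi).1.le))
            (fun i hi => le_trans
              (weight_anti hw j i hj1 (Finset.mem_Ioc.mp hi).1.le) hwj)
      _ = (ε/2) ^ (m - j) := by rw [Finset.prod_const, Nat.card_Ioc]
  have hP : (∏ n ∈ Finset.Icc 1 m, w n) ≤ w1 ^ j * (ε/2) ^ (m - j) := by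
    rw [hsplit]
    exact mul_le_mul hb1 hb2
      (Finset.prod_nonneg fun i hi => hw.2.1 i (le_trans hj1 (Finset.mem_Ioc.mp hi).1.le))
      (by positivity)
  have hhalf : (1/2 : ℝ) ^ (m - j) ≤ (1/2 : ℝ) ^ n₀ :=
    pow_le_pow_of_le_one (by norm_num) (by norm_num) (by omega)
  have hkey : w1 ^ j * (1/2 : ℝ) ^ (m - j) ≤ ε ^ j := by
    calc w1 ^ j * (1/2:ℝ) ^ (m-j) ≤ w1 ^ j * (1/2:ℝ) ^ n₀ :=
          mul_le_mul_of_nonneg_left hhalf (by positivity)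
      _ ≤ w1 ^ j * (ε ^ j / (w1 ^ j + 1)) :=
          mul_le_mul_of_nonneg_left hn₀.le (by positivity)
      _ = ε ^ j * (w1 ^ j / (w1 ^ j + 1)) := by ring
      _ ≤ ε ^ j * 1 := by
          refine mul_le_mul_of_nonneg_left ?_ (by positivity)
          rw [div_le_one (by positivity)]; linarith
      _ = ε ^ j := mul_one _
  have hPe : (∏ n ∈ Finset.Icc 1 m, w n) ≤ ε ^ m := by
    calc (∏ n ∈ Finset.Icc 1 m, w n) ≤ w1 ^ j * (ε/2) ^ (m - j) := hP
      _ = (w1 ^ j * (1/2:ℝ) ^ (m-j)) * ε ^ (m-j) := by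
          rw [div_eq_mul_one_div ε 2, mul_comm ε (1/2), mul_pow]; ring
      _ ≤ ε ^ j * ε ^ (m-j) := mul_le_mul_of_nonneg_right hkey (by positivity)
      _ = ε ^ m := by rw [← pow_add]; congr 1; omega
  have hm0 : (m : ℝ) ≠ 0 := Nat.cast_ne_zero.mpr (by omega)
  calc gmean w m = (∏ n ∈ Finset.Icc 1 m, w n) ^ ((1:ℝ)/(m:ℝ)) := rfl
    _ ≤ (ε ^ m) ^ ((1:ℝ)/(m:ℝ)) :=
        Real.rpow_le_rpow
          (Finset.prod_nonneg fun i hi => hw.2.1 i (Finset.mem_Icc.mp hi).1) hPe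
          (by positivity)
    _ = ε := by
        rw [← Real.rpow_natCast ε m, ← Real.rpow_mul hε.le, mul_one_div,
          div_self hm0, Real.rpow_one]

lemma dbl_gmean_small {w : ℕ → ℝ} (hw : IsWeight w) {ε : ℝ} (hε : 0 < ε) :
    ∃ K, ∀ k, K ≤ k → dbl (gmean w) (k + 2) ≤ ε := by
  obtain ⟨K₀, _, hK₀⟩ := gmean_small hw hε
  refine ⟨2 * K₀, fun k hk => ?_⟩
  have : K₀ ≤ (k + 2 + 1) / 2 := by omega
  exact hK₀ _ this

lemma summable_aux {C r : ℝ} (hC : 0 < C) (hr : 0 ≤ r) (v : ℕ → ℝ)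
    (hv : ∀ n, 0 ≤ v n)
    (hsmall : ∀ ε, 0 < ε → ∃ K, ∀ k, K ≤ k → v (k + 2) ≤ ε) :
    Summable (fun k : ℕ => (∏ n ∈ Finset.Icc 1 (k + 1), v n) ^ 2 * (C * r) ^ (2 * (k + 1))) := by
  rcases hr.eq_or_lt with h0 | hrpos
  · have : (fun k : ℕ => (∏ n ∈ Finset.Icc 1 (k + 1), v n) ^ 2 * (C * r) ^ (2 * (k + 1)))
        = fun _ => 0 := by
      funext k
      rw [← h0, mul_zero, zero_pow (by omega), mul_zero]
    rw [this]; exact summable_zero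
  · set t := C * r with ht
    have htpos : 0 < t := by positivity
    obtain ⟨K, hK⟩ := hsmall ((2 * t)⁻¹) (by positivity)
    refine summable_of_ratio_norm_eventually_le (r := 1/2) (by norm_num) ?_
    filter_upwards [Filter.eventually_ge_atTop K] with k hk
    set P := ∏ n ∈ Finset.Icc 1 (k + 1), v n with hPdef
    have hPn : 0 ≤ P := Finset.prod_nonneg fun i hi => hv i
    have hstep : (∏ n ∈ Finset.Icc 1 (k + 2), v n) = P * v (k + 2) := by
      rw [hPdef, ← Finset.prod_Icc_succ_top (by omega : 1 ≤ k + 2)]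
    have hterm : (∏ n ∈ Finset.Icc 1 (k + 1 + 1), v n) ^ 2 * t ^ (2 * (k + 1 + 1))
        = ((P ^ 2) * t ^ (2 * (k + 1))) * (v (k + 2) * t) ^ 2 := by
      have h22 : k + 1 + 1 = k + 2 := by omega
      rw [h22, hstep]; ring
    have hvk : v (k + 2) * t ≤ 1/2 := by
      calc v (k + 2) * t ≤ (2 * t)⁻¹ * t := mul_le_mul_of_nonneg_right (hK k hk) htpos.le
        _ = 1/2 := by field_simp
    have hsq : (v (k + 2) * t) ^ 2 ≤ 1/2 := by
      calc (v (k + 2) * t) ^ 2 ≤ (1/2 : ℝ) ^ 2 :=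
            pow_le_pow_left₀ (mul_nonneg (hv _) htpos.le) hvk 2
        _ ≤ 1/2 := by norm_num
    have hnn : (0:ℝ) ≤ P ^ 2 * t ^ (2 * (k + 1)) := by positivity
    rw [Real.norm_of_nonneg (by positivity), Real.norm_of_nonneg hnn, hterm]
    calc P ^ 2 * t ^ (2 * (k + 1)) * (v (k + 2) * t) ^ 2
        ≤ P ^ 2 * t ^ (2 * (k + 1)) * (1/2) := mul_le_mul_of_nonneg_left hsq hnn
      _ = 1/2 * (P ^ 2 * t ^ (2 * (k + 1))) := by ring

lemma Ftilde_mono {C : ℝ} (hC : 0 < C) (v : ℕ → ℝ) (hv : ∀ n, 0 ≤ v n)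
    (hsmall : ∀ ε, 0 < ε → ∃ K, ∀ k, K ≤ k → v (k + 2) ≤ ε)
    {r s : ℝ} (hr : 0 ≤ r) (hrs : r ≤ s) : Ftilde C v r ≤ Ftilde C v s := by
  have hs : 0 ≤ s := hr.trans hrs
  have hterm : ∀ k : ℕ, (∏ n ∈ Finset.Icc 1 (k + 1), v n) ^ 2 * (C * r) ^ (2 * (k + 1))
      ≤ (∏ n ∈ Finset.Icc 1 (k + 1), v n) ^ 2 * (C * s) ^ (2 * (k + 1)) := by
    intro k
    refine mul_le_mul_of_nonneg_left ?_ (by positivity)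
    exact pow_le_pow_left₀ (by positivity) (mul_le_mul_of_nonneg_left hrs hC.le) _
  have h1 : (∑' k : ℕ, (∏ n ∈ Finset.Icc 1 (k + 1), v n) ^ 2 * (C * r) ^ (2 * (k + 1)))
      ≤ ∑' k : ℕ, (∏ n ∈ Finset.Icc 1 (k + 1), v n) ^ 2 * (C * s) ^ (2 * (k + 1)) :=
    Summable.tsum_le_tsum hterm (summable_aux hC hr v hv hsmall) (summable_aux hC hs v hv hsmall)
  have h2 : (0:ℝ) ≤ 1 + ∑' k : ℕ,
      (∏ n ∈ Finset.Icc 1 (k + 1), v n) ^ 2 * (C * r) ^ (2 * (k + 1)) := by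
    have : (0:ℝ) ≤ ∑' k : ℕ,
        (∏ n ∈ Finset.Icc 1 (k + 1), v n) ^ 2 * (C * r) ^ (2 * (k + 1)) :=
      tsum_nonneg fun k => by positivity
    linarith
  have hFw : Fw C v r ≤ Fw C v s := by
    unfold Fw
    refine mul_le_mul ?_ (by linarith) h2 ?_
    · have := mul_le_mul_of_nonneg_right hrs (hv 1); linarith
    · have := mul_nonneg hs (hv 1); linarith
  have hFwn : 0 ≤ Fw C v r := by
    unfold Fw
    refine mul_nonneg ?_ h2
    have := mul_nonneg hr (hv 1); linarith
  unfold Ftilde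
  exact mul_le_mul hrs hFw hFwn hs

end WeightLemmas

/-- inclusion region for the ε-pseudospectrum of a non-normal
`A ∈ E_w(H)`: `σ_ε(A) ⊆ {z : d(z,σ(A)) < ν·H_w(ε/ν)}` with `ν = |N|_ẇ̄`,
where `G` is the inverse of `F̃_ẇ̄` on `[0,∞)`, so that
`ν·H_w(ε/ν) = ν·(G(ν/ε))⁻¹`. -/
theorem stmt_19 (w : ℕ → ℝ) (hw : IsWeight w) (ε : ℝ) (hε : 0 < ε)
    (A D N : H →L[ℂ] H) (hA : MemE w A) (hSchur : IsSchurDecomp A D N)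
    (hnn : ¬ IsStarNormal A) (hν : 0 < gaugeE (dbl (gmean w)) N)
    (C : ℝ) (hC : 0 < C)
    (hDos : ∀ Q : H →L[ℂ] H, IsCompactOperator Q → spectrum ℂ Q = {0} →
      ∀ k, 1 ≤ k →
        ‖Q ^ (2 * k)‖ ≤ C ^ (2 * k) * (∏ n ∈ Finset.Icc 1 k, sNum n Q) ^ 2)
    (G : ℝ → ℝ)
    (hG₁ : ∀ r, 0 ≤ r → G (Ftilde C (dbl (gmean w)) r) = r)
    (hG₂ : ∀ y, 0 ≤ y → 0 ≤ G y ∧ Ftilde C (dbl (gmean w)) (G y) = y) :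
    pseudoSpec ε A ⊆
      {z : ℂ | Metric.infDist z (spectrum ℂ A) <
        gaugeE (dbl (gmean w)) N * (G (gaugeE (dbl (gmean w)) N / ε))⁻¹} := by
  obtain ⟨hADN, hDcp, hNcp, hDnorm, -, hspecDA, hspecN, hquasi⟩ := hSchur
  have hntH : Nontrivial H := by
    by_contra hcon
    rw [not_nontrivial_iff_subsingleton] at hcon
    exact hnn ⟨Subsingleton.elim _ _⟩
  haveI := hntH
  haveI : Nontrivial (H →L[ℂ] H) := by
    obtain ⟨x, hx⟩ := exists_ne (0 : H)
    refine ⟨1, 0, fun h => hx ?_⟩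
    have := ContinuousLinearMap.ext_iff.mp h x
    simpa using this
  set v : ℕ → ℝ := dbl (gmean w) with hvdef
  set ν : ℝ := gaugeE v N with hνdef
  have hν' : 0 < ν := hν
  have hvnn : ∀ n, 0 ≤ v n := fun n => gmean_nonneg hw _
  have hvsmall : ∀ ε', 0 < ε' → ∃ K, ∀ k, K ≤ k → v (k + 2) ≤ ε' := by
    intro ε' hε'
    exact dbl_gmean_small hw hε'
  -- positivity of G (ν / ε)
  have hg := hG₂ (ν / ε) (by positivity)
  have hgpos : 0 < G (ν / ε) := by
    rcases hg.1.eq_or_lt with h | h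
    · exfalso
      have h2 := hg.2
      rw [← h] at h2
      unfold Ftilde at h2
      rw [zero_mul] at h2
      have : (0:ℝ) < ν / ε := by positivity
      rw [← h2] at this
      exact lt_irrefl _ this
    · exact h
  -- the gauge value is attained
  set S := {M : ℝ | 0 ≤ M ∧ ∀ k, 1 ≤ k → sNum k N ≤ M * v k} with hSdef
  have hSne : S.Nonempty := by
    by_contra hcon
    rw [Set.not_nonempty_iff_eq_empty] at hcon
    have h0 : (0:ℝ) < sInf S := hν
    rw [hcon, Real.sInf_empty] at h0
    exact lt_irrefl _ h0
  have hclosed : IsClosed S := by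
    have hSeq : S = Set.Ici 0 ∩ ⋂ k : ℕ, {M : ℝ | 1 ≤ k → sNum k N ≤ M * v k} := by
      ext M
      simp only [hSdef, Set.mem_setOf_eq, Set.mem_inter_iff, Set.mem_Ici, Set.mem_iInter]
    rw [hSeq]
    refine isClosed_Ici.inter (isClosed_iInter fun k => ?_)
    by_cases hk : 1 ≤ k
    · have : {M : ℝ | 1 ≤ k → sNum k N ≤ M * v k} = {M : ℝ | sNum k N ≤ M * v k} := by
        ext M; simp [hk]
      rw [this]
      exact isClosed_le continuous_const (continuous_id.mul continuous_const)
    · have : {M : ℝ | 1 ≤ k → sNum k N ≤ M * v k} = Set.univ := by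
        ext M; simp [hk]
      rw [this]; exact isClosed_univ
  have hmem : ν ∈ S := hclosed.csInf_mem hSne ⟨0, fun M hM => hM.1⟩
  -- main argument
  intro z hz
  rcases hz with hzs | ⟨hz, hres⟩
  · simp only [Set.mem_setOf_eq]
    rw [Metric.infDist_zero_of_mem hzs]
    exact mul_pos hν' (inv_pos.mpr hgpos)
  · simp only [Set.mem_setOf_eq]
    set d := Metric.infDist z (spectrum ℂ A) with hddef
    have hdpos : 0 < d := by
      rw [hddef]
      exact ((spectrum.isClosed A).notMem_iff_infDist_pos (spectrum.nonempty A)).mp hz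
    set r : ℝ := ν / d with hrdef
    have hrpos : 0 < r := div_pos hν' hdpos
    set c : H →L[ℂ] H := algebraMap ℂ (H →L[ℂ] H) z with hcdef
    have hzD : z ∉ spectrum ℂ D := by rw [hspecDA]; exact hz
    have hu : IsUnit (c - D) := spectrum.notMem_iff.mp hzD
    set R : H →L[ℂ] H := Ring.inverse (c - D) with hRdef
    -- normality of c - D
    have hcomm : star (c - D) * (c - D) = (c - D) * star (c - D) := by
      have hstarc : star c = algebraMap ℂ (H →L[ℂ] H) (starRingEnd ℂ z) := by
        rw [hcdef, ← algebraMap_star_comm]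
        rfl
      have h1 : ∀ x : H →L[ℂ] H, c * x = x * c := fun x => Algebra.commutes z x
      have h2 : ∀ x : H →L[ℂ] H, star c * x = x * star c := fun x => by
        rw [hstarc]; exact Algebra.commutes _ x
      have h3 : star D * D = D * star D := hDnorm.star_comm_self
      have e1 : (star c - star D) * (c - D)
          = star c * c - star c * D - star D * c + star D * D := by noncomm_ring
      have e2 : (c - D) * (star c - star D)
          = c * star c - c * star D - D * star c + D * star D := by noncomm_ring
      rw [star_sub, e1, e2, h2 c, h2 D, ← h1 (star D), h3]
      abel
    have hspecu : ∀ μ ∈ spectrum ℂ (c - D), d ≤ ‖μ‖ := by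
      intro μ hμ
      rw [← spectrum.singleton_sub_eq D z, Set.mem_sub] at hμ
      obtain ⟨x, hx, y, hy, hxy⟩ := hμ
      rw [Set.mem_singleton_iff] at hx
      have hyA : y ∈ spectrum ℂ A := hspecDA ▸ hy
      rw [← hxy, hx]
      calc d ≤ dist z y := Metric.infDist_le_dist_of_mem hyA
        _ = ‖z - y‖ := dist_eq_norm z y
    have hRnorm : ‖R‖ ≤ 1 / d := norm_ring_inverse_le _ hu hcomm hdpos hspecu
    set B : H →L[ℂ] H := R * N with hBdef
    have hBspec : spectrum ℂ B = {0} := hquasi z hz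
    have hBcp : IsCompactOperator (⇑B) := by
      have hco : ⇑B = ⇑R ∘ ⇑N := by
        funext x
        simp [hBdef, ContinuousLinearMap.mul_apply]
      rw [hco]
      exact hNcp.continuous_comp R.continuous
    have hsnB : ∀ n, 1 ≤ n → sNum n B ≤ r * v n := by
      intro n hn
      calc sNum n B ≤ ‖R‖ * sNum n N := sNum_mul_le hn R N
        _ ≤ (1/d) * (ν * v n) :=
            mul_le_mul hRnorm (hmem.2 n hn) (sNum_nonneg n N) (by positivity)
        _ = r * v n := by rw [hrdef]; ring
    have heven : ∀ k, 1 ≤ k →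
        ‖B ^ (2*k)‖ ≤ (∏ n ∈ Finset.Icc 1 k, v n) ^ 2 * (C*r) ^ (2*k) := by
      intro k hk
      have h1 := hDos B hBcp hBspec k hk
      have h2 : (∏ n ∈ Finset.Icc 1 k, sNum n B) ≤ ∏ n ∈ Finset.Icc 1 k, (r * v n) :=
        Finset.prod_le_prod (fun i _ => sNum_nonneg i B)
          (fun i hi => hsnB i (Finset.mem_Icc.mp hi).1)
      have h3 : (∏ n ∈ Finset.Icc 1 k, (r * v n)) = r ^ k * ∏ n ∈ Finset.Icc 1 k, v n := by
        rw [Finset.prod_mul_distrib, Finset.prod_const, Nat.card_Icc]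
        norm_num
      have h4 : (∏ n ∈ Finset.Icc 1 k, sNum n B) ^ 2
          ≤ (r ^ k * ∏ n ∈ Finset.Icc 1 k, v n) ^ 2 :=
        pow_le_pow_left₀ (Finset.prod_nonneg fun i _ => sNum_nonneg i B)
          (h2.trans_eq h3) 2
      calc ‖B ^ (2*k)‖ ≤ C ^ (2*k) * (∏ n ∈ Finset.Icc 1 k, sNum n B) ^ 2 := h1
        _ ≤ C ^ (2*k) * (r ^ k * ∏ n ∈ Finset.Icc 1 k, v n) ^ 2 :=
            mul_le_mul_of_nonneg_left h4 (by positivity)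
        _ = (∏ n ∈ Finset.Icc 1 k, v n) ^ 2 * (C*r) ^ (2*k) := by ring
    set a : ℕ → ℝ := fun k => (∏ n ∈ Finset.Icc 1 (k+1), v n) ^ 2 * (C*r) ^ (2*(k+1))
      with hadef
    have hasum : Summable a := summable_aux hC hrpos.le v hvnn hvsmall
    set e : ℕ → ℝ := fun k => match k with | 0 => 1 | (k+1) => a k with hedef
    have hesum : Summable e := by
      have h5 : Summable (fun k => e (k+1)) := hasum
      exact (summable_nat_add_iff 1).mp h5
    have hXnorm : ∀ k, ‖(B^2)^k‖ ≤ e k := by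
      intro k
      match k with
      | 0 =>
        rw [pow_zero]
        rw [show (1 : H →L[ℂ] H) = ContinuousLinearMap.id ℂ H from rfl,
          ContinuousLinearMap.norm_id]
      | (k+1) =>
        have h6 : (B^2)^(k+1) = B^(2*(k+1)) := by rw [← pow_mul]
        rw [h6]
        exact heven (k+1) (by omega)
    have hXsum : Summable (fun k => (B^2)^k) :=
      Summable.of_norm (Summable.of_nonneg_of_le (fun k => norm_nonneg _) hXnorm hesum)
    set T : H →L[ℂ] H := ∑' k, (B^2)^k with hTdef
    have hTsum : HasSum (fun k => (B^2)^k) T := hXsum.hasSum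
    have hXto0 : Filter.Tendsto (fun n => (B^2)^n) Filter.atTop (nhds 0) :=
      squeeze_zero_norm hXnorm hesum.tendsto_atTop_zero
    have hgeom : (1 - B^2) * T = 1 := by
      have h7 : HasSum (fun k => (1 - B^2) * (B^2)^k) ((1 - B^2) * T) := hTsum.mul_left _
      have h8 : ∀ n : ℕ, (∑ k ∈ Finset.range n, (1 - B^2) * (B^2)^k) = 1 - (B^2)^n := by
        intro n
        have h9 : ∀ k : ℕ, (1 - B^2) * (B^2)^k = (B^2)^k - (B^2)^(k+1) := by
          intro k
          rw [sub_mul, one_mul, ← pow_succ']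
        simp_rw [h9]
        rw [Finset.sum_range_sub' (fun i => (B^2)^i), pow_zero]
      have h10 := h7.tendsto_sum_nat
      simp_rw [h8] at h10
      have h11 : Filter.Tendsto (fun n => (1 : H →L[ℂ] H) - (B^2)^n) Filter.atTop
          (nhds ((1 : H →L[ℂ] H) - 0)) := tendsto_const_nhds.sub hXto0
      rw [sub_zero] at h11
      exact tendsto_nhds_unique h10 h11
    have hzA : IsUnit (c - A) := spectrum.notMem_iff.mp hz
    have hkey : c - A = (c - D) * (1 - B) := by
      have h5 : (c - D) * B = N := by
        rw [hBdef, ← mul_assoc, Ring.mul_inverse_cancel _ hu, one_mul]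
      rw [mul_sub, mul_one, h5, hADN]
      abel
    set W : H →L[ℂ] H := ((1 + B) * T) * R with hWdef
    have hWinv : (c - A) * W = 1 := by
      rw [hkey, hWdef]
      calc (c - D) * (1 - B) * ((1 + B) * T * R)
          = (c - D) * ((((1 - B) * (1 + B)) * T) * R) := by simp only [mul_assoc]
        _ = (c - D) * (((1 - B^2) * T) * R) := by
            rw [show (1 - B) * (1 + B) = 1 - B^2 by noncomm_ring]
        _ = (c - D) * R := by rw [hgeom, one_mul]
        _ = 1 := Ring.mul_inverse_cancel _ hu
    have hres_eq : resolvent A z = W := by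
      obtain ⟨U', hU'⟩ := hzA
      have h12 : Ring.inverse (c - A) = W := by
        rw [← hU', Ring.inverse_unit]
        calc ((U'⁻¹ : (H →L[ℂ] H)ˣ) : H →L[ℂ] H)
            = ↑U'⁻¹ * ((c - A) * W) := by rw [hWinv, mul_one]
          _ = (↑U'⁻¹ * ↑U') * W := by rw [← hU', mul_assoc]
          _ = W := by rw [U'.inv_mul, one_mul]
      exact h12
    have hXsum' : Summable (fun k => ‖(B^2)^k‖) :=
      Summable.of_nonneg_of_le (fun k => norm_nonneg _) hXnorm hesum
    have hTnorm : ‖T‖ ≤ 1 + ∑' k, a k := by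
      have h13 : ‖T‖ ≤ ∑' k, ‖(B^2)^k‖ := norm_tsum_le_tsum_norm hXsum'
      have h14 : (∑' k, ‖(B^2)^k‖) ≤ ∑' k, e k := Summable.tsum_le_tsum hXnorm hXsum' hesum
      have h15 : (∑' k, e k) = 1 + ∑' k, a k := by
        rw [Summable.tsum_eq_zero_add hesum]
      linarith
    have hBn : ‖B‖ ≤ r * v 1 := by
      rw [← sNum_one B]
      exact hsnB 1 le_rfl
    have h1B : ‖1 + B‖ ≤ 1 + r * v 1 := by
      calc ‖1 + B‖ ≤ ‖(1 : H →L[ℂ] H)‖ + ‖B‖ := norm_add_le _ _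
        _ = 1 + ‖B‖ := by
            rw [show (1 : H →L[ℂ] H) = ContinuousLinearMap.id ℂ H from rfl,
              ContinuousLinearMap.norm_id]
        _ ≤ 1 + r * v 1 := by linarith
    have htsum_nn : (0:ℝ) ≤ ∑' k, a k := tsum_nonneg fun k => by positivity
    have hWnorm : ‖W‖ ≤ Fw C v r * (1/d) := by
      have hf1 : (0:ℝ) ≤ 1 + r * v 1 := by
        have := mul_nonneg hrpos.le (hvnn 1); linarith
      calc ‖W‖ ≤ ‖(1 + B) * T‖ * ‖R‖ := norm_mul_le _ _
        _ ≤ (‖1 + B‖ * ‖T‖) * ‖R‖ :=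
            mul_le_mul_of_nonneg_right (norm_mul_le _ _) (norm_nonneg _)
        _ ≤ ((1 + r * v 1) * (1 + ∑' k, a k)) * (1/d) := by
            refine mul_le_mul ?_ hRnorm (norm_nonneg _) ?_
            · exact mul_le_mul h1B hTnorm (norm_nonneg _) hf1
            · exact mul_nonneg hf1 (by linarith)
        _ = Fw C v r * (1/d) := rfl
    have hlt : ν / ε < Ftilde C v r := by
      have h16 : ‖resolvent A z‖ ≤ Fw C v r * (1/d) := by
        rw [hres_eq]; exact hWnorm
      have h17 : 1/ε < Fw C v r * (1/d) := lt_of_lt_of_le hres h16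
      have h18 : Ftilde C v r = ν * (Fw C v r * (1/d)) := by
        unfold Ftilde
        rw [hrdef]
        ring
      rw [h18, div_eq_mul_one_div ν ε]
      exact mul_lt_mul_of_pos_left h17 hν'
    have hG_lt : G (ν/ε) < r := by
      by_contra hcon
      push_neg at hcon
      have h19 : Ftilde C v r ≤ Ftilde C v (G (ν/ε)) :=
        Ftilde_mono hC v hvnn hvsmall hrpos.le hcon
      rw [hg.2] at h19
      linarith
    have h20 : d * G (ν/ε) < ν := by
      have h21 := mul_lt_mul_of_pos_left hG_lt hdpos
      have h22 : d * r = ν := by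
        rw [hrdef]
        field_simp
      rw [h22] at h21
      exact h21
    have h23 : d < ν / G (ν/ε) := (lt_div_iff₀ hgpos).mpr h20
    rw [div_eq_mul_inv] at h23
    exact h23

end
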